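/- Let K ≥ 1 and j ≥ 0 be integers, let a ∈ [0,1) and b > 0 be real numbers, and set p := ⌈a⌉, q := ⌊a + 2bK⌋, ω := a + 2bK − q (the fractional part of a + 2bK), and p₁ := q − p. Assume p < q. Then ∑_{m=p}^{q−1} I_{C₁}(K,j;a−m,b) = i · exp(2πi a K + 2πi b K²) · ∑_{l=0}^{j} i^l · binom(j,l) · J(K,l; p₁, ω, b). -/

import Mathlib

open scoped BigOperators
open Complex

/-- `I_{C₁}(K,j;c,b)`: the contour integral of `z^j exp(2πi c z + 2πi b z²)`
along the vertical segment from `K` to `K+iK`. -/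
noncomputable def IC1 (K j : ℕ) (c b : ℝ) : ℂ :=
  Complex.I * ((K : ℂ) ^ j)⁻¹ *
    ∫ t in (0 : ℝ)..(K : ℝ), ((K : ℂ) + Complex.I * (t : ℂ)) ^ j *
      Complex.exp (2 * (Real.pi : ℂ) * Complex.I * (c : ℂ) *
          ((K : ℂ) + Complex.I * (t : ℂ)) +
        2 * (Real.pi : ℂ) * Complex.I * (b : ℂ) *
          ((K : ℂ) + Complex.I * (t : ℂ)) ^ 2)

/-- `J(K,l;M,w,b) = K^{-l} ∫_0^K t^l e^{-2πwt-2πibt²} (1 - e^{-2πMt})/(e^{2πt}-1) dt`. -/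
noncomputable def Jint (K l : ℕ) (M : ℤ) (w b : ℝ) : ℂ :=
  ((K : ℂ) ^ l)⁻¹ * ∫ t in (0 : ℝ)..(K : ℝ), (t : ℂ) ^ l *
    Complex.exp (-2 * (Real.pi : ℂ) * (w : ℂ) * (t : ℂ) -
      2 * (Real.pi : ℂ) * Complex.I * (b : ℂ) * (t : ℂ) ^ 2) *
    ((1 - Complex.exp (-2 * (Real.pi : ℂ) * (M : ℂ) * (t : ℂ))) /
      (Complex.exp (2 * (Real.pi : ℂ) * (t : ℂ)) - 1))

open Complex in
noncomputable def hfun (w b : ℝ) (M l : ℕ) (t : ℝ) : ℂ :=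
  (t : ℂ) ^ l * Complex.exp (-2 * (Real.pi : ℂ) * (w : ℂ) * (t : ℂ) -
      2 * (Real.pi : ℂ) * Complex.I * (b : ℂ) * (t : ℂ) ^ 2) *
    ∑ n ∈ Finset.range M, Complex.exp (-2 * (Real.pi : ℂ) * ((n : ℂ) + 1) * (t : ℂ))

lemma hfun_continuous (w b : ℝ) (M l : ℕ) : Continuous (hfun w b M l) := by
  unfold hfun; fun_prop

lemma geom_aux (N : ℕ) {t : ℝ} (ht : 0 < t) :
    (1 - Complex.exp (-2 * (Real.pi : ℂ) * (N : ℂ) * (t : ℂ))) /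
      (Complex.exp (2 * (Real.pi : ℂ) * (t : ℂ)) - 1) =
    ∑ n ∈ Finset.range N, Complex.exp (-2 * (Real.pi : ℂ) * ((n : ℂ) + 1) * (t : ℂ)) := by
  set x : ℂ := Complex.exp (-(2 * (Real.pi : ℂ) * (t : ℂ))) with hxdef
  have hx0 : x ≠ 0 := Complex.exp_ne_zero _
  have hxr : x = ((Real.exp (-(2 * Real.pi * t)) : ℝ) : ℂ) := by
    rw [Complex.ofReal_exp]; congr 1; push_cast; ring
  have hx1 : x ≠ 1 := by
    rw [hxr]
    intro h
    have h2 : Real.exp (-(2 * Real.pi * t)) = 1 := by exact_mod_cast h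
    have h3 : -(2 * Real.pi * t) = 0 := (Real.exp_eq_one_iff _).mp h2
    nlinarith [Real.pi_pos]
  have hxN : Complex.exp (-2 * (Real.pi : ℂ) * (N : ℂ) * (t : ℂ)) = x ^ N := by
    rw [hxdef, ← Complex.exp_nat_mul]; congr 1; ring
  have hxn : ∀ n : ℕ, Complex.exp (-2 * (Real.pi : ℂ) * ((n : ℂ) + 1) * (t : ℂ)) = x ^ (n + 1) := by
    intro n; rw [hxdef, ← Complex.exp_nat_mul]; congr 1; push_cast; ring
  have hxinv : Complex.exp (2 * (Real.pi : ℂ) * (t : ℂ)) = x⁻¹ := by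
    rw [hxdef, ← Complex.exp_neg, neg_neg]
  rw [hxN, hxinv, Finset.sum_congr rfl fun n _ => hxn n]
  have hgeom : ∑ n ∈ Finset.range N, x ^ (n + 1) = x * ((x ^ N - 1) / (x - 1)) := by
    rw [← geom_sum_eq hx1, Finset.mul_sum]
    exact Finset.sum_congr rfl fun n _ => pow_succ' x n
  rw [hgeom]
  have hx1' : x - 1 ≠ 0 := sub_ne_zero.mpr hx1
  have hxinv1 : x⁻¹ - 1 ≠ 0 := sub_ne_zero.mpr (fun h => hx1 (inv_eq_one.mp h))
  have h1x : 1 - x ≠ 0 := fun h => hx1 (by linear_combination -h)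
  field_simp
  ring

lemma Jint_eq (K l N : ℕ) (w b : ℝ) :
    Jint K l (N : ℤ) w b = ((K : ℂ) ^ l)⁻¹ * ∫ t in (0 : ℝ)..(K : ℝ), hfun w b N l t := by
  unfold Jint
  congr 1
  apply intervalIntegral.integral_congr_ae
  filter_upwards with t ht
  rw [Set.uIoc_of_le (by positivity : (0 : ℝ) ≤ (K : ℝ))] at ht
  unfold hfun
  rw [Int.cast_natCast, geom_aux N ht.1]


/-- Evaluation of `∑_{m=p}^{q−1} I_{C₁}(K,j;a−m,b)` in terms of `J`-integrals. -/
theorem sum_IC1_eq_J (K : ℕ) (hK : 1 ≤ K) (j : ℕ) (a b : ℝ)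
    (ha : a ∈ Set.Ico (0 : ℝ) 1) (hb : 0 < b)
    (hpq : (⌈a⌉ : ℤ) < ⌊a + 2 * b * K⌋) :
    ∑ m ∈ Finset.Icc (⌈a⌉ : ℤ) (⌊a + 2 * b * K⌋ - 1), IC1 K j (a - (m : ℝ)) b =
      Complex.I * Complex.exp (2 * (Real.pi : ℂ) * Complex.I * (a : ℂ) * (K : ℂ) +
          2 * (Real.pi : ℂ) * Complex.I * (b : ℂ) * (K : ℂ) ^ 2) *
        ∑ l ∈ Finset.range (j + 1), Complex.I ^ l * (j.choose l : ℂ) *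
          Jint K l (⌊a + 2 * b * K⌋ - ⌈a⌉) (Int.fract (a + 2 * b * K)) b := by
  set p : ℤ := ⌈a⌉ with hp
  set q : ℤ := ⌊a + 2 * b * K⌋ with hq
  set w : ℝ := Int.fract (a + 2 * b * K) with hwdef
  set M : ℕ := (q - p).toNat with hM
  have hMq : ((M : ℤ)) = q - p := Int.toNat_of_nonneg (by omega)
  have hK0 : (K : ℂ) ≠ 0 := Nat.cast_ne_zero.mpr (by omega)
  have hwC : (w : ℂ) = (a : ℂ) + 2 * (b : ℂ) * (K : ℂ) - (q : ℂ) := by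
    have h1 : w = (a + 2 * b * K) - (q : ℝ) := (Int.self_sub_floor _).symm
    rw [h1]; push_cast; ring
  set eC : ℂ := Complex.exp (2 * (Real.pi : ℂ) * Complex.I * (a : ℂ) * (K : ℂ) +
      2 * (Real.pi : ℂ) * Complex.I * (b : ℂ) * (K : ℂ) ^ 2) with heC
  have expid : ∀ (m : ℤ) (t : ℝ),
      Complex.exp (2 * (Real.pi : ℂ) * Complex.I * ((a - (m : ℝ) : ℝ) : ℂ) *
          ((K : ℂ) + Complex.I * (t : ℂ)) +
        2 * (Real.pi : ℂ) * Complex.I * (b : ℂ) * ((K : ℂ) + Complex.I * (t : ℂ)) ^ 2)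
      = eC * (Complex.exp (-2 * (Real.pi : ℂ) * (w : ℂ) * (t : ℂ) -
            2 * (Real.pi : ℂ) * Complex.I * (b : ℂ) * (t : ℂ) ^ 2) *
          Complex.exp (-2 * (Real.pi : ℂ) * (((q - m : ℤ) : ℂ)) * (t : ℂ))) := by
    intro m t
    rw [heC, ← Complex.exp_add, ← Complex.exp_add]
    rw [show 2 * (Real.pi : ℂ) * Complex.I * ((a - (m : ℝ) : ℝ) : ℂ) *
          ((K : ℂ) + Complex.I * (t : ℂ)) +
        2 * (Real.pi : ℂ) * Complex.I * (b : ℂ) * ((K : ℂ) + Complex.I * (t : ℂ)) ^ 2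
      = (2 * (Real.pi : ℂ) * Complex.I * (a : ℂ) * (K : ℂ) +
          2 * (Real.pi : ℂ) * Complex.I * (b : ℂ) * (K : ℂ) ^ 2 +
        (-2 * (Real.pi : ℂ) * (w : ℂ) * (t : ℂ) -
            2 * (Real.pi : ℂ) * Complex.I * (b : ℂ) * (t : ℂ) ^ 2 +
          -2 * (Real.pi : ℂ) * (((q - m : ℤ) : ℂ)) * (t : ℂ))) +
        ((-(m * (K : ℤ)) : ℤ) : ℂ) * (2 * (Real.pi : ℂ) * Complex.I) from by
      rw [hwC]; push_cast
      linear_combination (2 * (Real.pi : ℂ) * a * t - 2 * (Real.pi : ℂ) * m * t +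
        4 * (Real.pi : ℂ) * b * K * t + 2 * (Real.pi : ℂ) * b * t ^ 2 * Complex.I) * Complex.I_sq]
    rw [Complex.exp_add, Complex.exp_int_mul_two_pi_mul_I, mul_one]
  have key : ∀ t : ℝ,
      (∑ m ∈ Finset.Icc p (q - 1), ((K : ℂ) + Complex.I * (t : ℂ)) ^ j *
        Complex.exp (2 * (Real.pi : ℂ) * Complex.I * ((a - (m : ℝ) : ℝ) : ℂ) *
            ((K : ℂ) + Complex.I * (t : ℂ)) +
          2 * (Real.pi : ℂ) * Complex.I * (b : ℂ) * ((K : ℂ) + Complex.I * (t : ℂ)) ^ 2))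
      = eC * ∑ l ∈ Finset.range (j + 1),
          Complex.I ^ l * (j.choose l : ℂ) * (K : ℂ) ^ (j - l) * hfun w b M l t := by
    intro t
    have hbin : ((K : ℂ) + Complex.I * (t : ℂ)) ^ j
        = ∑ l ∈ Finset.range (j + 1),
            (Complex.I * (t : ℂ)) ^ l * (K : ℂ) ^ (j - l) * (j.choose l : ℂ) := by
      rw [add_comm]; exact add_pow _ _ j
    have hsum : (∑ m ∈ Finset.Icc p (q - 1),
          Complex.exp (-2 * (Real.pi : ℂ) * (((q - m : ℤ) : ℂ)) * (t : ℂ)))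
        = ∑ n ∈ Finset.range M, Complex.exp (-2 * (Real.pi : ℂ) * ((n : ℂ) + 1) * (t : ℂ)) := by
      apply Finset.sum_nbij' (i := fun m : ℤ => (q - 1 - m).toNat)
        (j := fun n : ℕ => q - 1 - (n : ℤ))
      · intro m hm; simp only [Finset.mem_Icc] at hm; simp only [Finset.mem_range]; omega
      · intro n hn; simp only [Finset.mem_range] at hn; simp only [Finset.mem_Icc]; omega
      · intro m hm; simp only [Finset.mem_Icc] at hm; omega
      · intro n hn; simp only [Finset.mem_range] at hn; omega
      · intro m hm
        simp only [Finset.mem_Icc] at hm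
        have h2 : (((q - 1 - m).toNat : ℤ)) = q - 1 - m := Int.toNat_of_nonneg (by omega)
        have h1 : (((q - 1 - m).toNat : ℕ) : ℂ) = (q : ℂ) - 1 - (m : ℂ) := by
          calc (((q - 1 - m).toNat : ℕ) : ℂ) = ((((q - 1 - m).toNat : ℤ)) : ℂ) := by push_cast; ring
          _ = _ := by rw [h2]; push_cast; ring
        rw [h1]
        congr 1
        push_cast
        ring
    calc (∑ m ∈ Finset.Icc p (q - 1), ((K : ℂ) + Complex.I * (t : ℂ)) ^ j *
        Complex.exp (2 * (Real.pi : ℂ) * Complex.I * ((a - (m : ℝ) : ℝ) : ℂ) *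
            ((K : ℂ) + Complex.I * (t : ℂ)) +
          2 * (Real.pi : ℂ) * Complex.I * (b : ℂ) * ((K : ℂ) + Complex.I * (t : ℂ)) ^ 2))
        = ∑ m ∈ Finset.Icc p (q - 1),
            (∑ l ∈ Finset.range (j + 1),
              (Complex.I * (t : ℂ)) ^ l * (K : ℂ) ^ (j - l) * (j.choose l : ℂ)) *
            (eC * (Complex.exp (-2 * (Real.pi : ℂ) * (w : ℂ) * (t : ℂ) -
                2 * (Real.pi : ℂ) * Complex.I * (b : ℂ) * (t : ℂ) ^ 2) *
              Complex.exp (-2 * (Real.pi : ℂ) * (((q - m : ℤ) : ℂ)) * (t : ℂ)))) := by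
          refine Finset.sum_congr rfl fun m hm => ?_
          rw [hbin, expid m t]
      _ = (∑ l ∈ Finset.range (j + 1),
              (Complex.I * (t : ℂ)) ^ l * (K : ℂ) ^ (j - l) * (j.choose l : ℂ)) *
            (eC * Complex.exp (-2 * (Real.pi : ℂ) * (w : ℂ) * (t : ℂ) -
                2 * (Real.pi : ℂ) * Complex.I * (b : ℂ) * (t : ℂ) ^ 2)) *
            (∑ m ∈ Finset.Icc p (q - 1),
              Complex.exp (-2 * (Real.pi : ℂ) * (((q - m : ℤ) : ℂ)) * (t : ℂ))) := by
          rw [Finset.mul_sum]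
          exact Finset.sum_congr rfl fun m hm => by ring
      _ = eC * ∑ l ∈ Finset.range (j + 1),
          Complex.I ^ l * (j.choose l : ℂ) * (K : ℂ) ^ (j - l) * hfun w b M l t := by
          rw [hsum]
          unfold hfun
          rw [Finset.sum_mul, Finset.sum_mul, Finset.mul_sum]
          refine Finset.sum_congr rfl fun l hl => ?_
          rw [mul_pow]
          ring
  -- main chain
  simp only [IC1]
  rw [← Finset.mul_sum]
  rw [← intervalIntegral.integral_finset_sum (μ := MeasureTheory.volume)
    (f := fun (m : ℤ) (t : ℝ) => ((K : ℂ) + Complex.I * (t : ℂ)) ^ j *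
      Complex.exp (2 * (Real.pi : ℂ) * Complex.I * ((a - (m : ℝ) : ℝ) : ℂ) *
          ((K : ℂ) + Complex.I * (t : ℂ)) +
        2 * (Real.pi : ℂ) * Complex.I * (b : ℂ) * ((K : ℂ) + Complex.I * (t : ℂ)) ^ 2))
    (fun m _ => (Continuous.intervalIntegrable (by fun_prop) _ _))]
  rw [intervalIntegral.integral_congr (g := fun t : ℝ =>
      eC * ∑ l ∈ Finset.range (j + 1),
        Complex.I ^ l * (j.choose l : ℂ) * (K : ℂ) ^ (j - l) * hfun w b M l t)
    (fun t _ => key t)]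
  rw [intervalIntegral.integral_const_mul]
  rw [intervalIntegral.integral_finset_sum (μ := MeasureTheory.volume)
    (f := fun (l : ℕ) (t : ℝ) => Complex.I ^ l * (j.choose l : ℂ) * (K : ℂ) ^ (j - l) * hfun w b M l t)
    (fun l _ => (Continuous.intervalIntegrable
      (continuous_const.mul (hfun_continuous w b M l)) _ _))]
  simp only [intervalIntegral.integral_const_mul]
  rw [show q - p = (M : ℤ) from hMq.symm]
  simp only [Jint_eq]
  simp only [Finset.mul_sum]
  refine Finset.sum_congr rfl fun l hl => ?_
  have hl' : l ≤ j := Nat.lt_succ_iff.mp (Finset.mem_range.mp hl)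
  rw [pow_sub₀ _ hK0 hl']
  field_simp
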